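/- Let T be a bounded linear operator on a complex Banach space. Suppose σ_a(T) is the disjoint union of σ_SF₊⁻(T) and E^0(T) (the eigenvalues of finite multiplicity isolated in σ(T)). Then σ(T) is the disjoint union of σ_W(T) and Π^0(T) if and only if σ_W(T) \ σ_SF₊⁻(T) = (E^0(T) \ Π^0(T)) ∪ (σ(T) \ σ_a(T)), where the sets E^0(T) \ Π^0(T) and σ(T) \ σ_a(T) are disjoint. -/

import Mathlib

open LinearMap Module

namespace SpectralPartition

variable {X : Type*} [NormedAddCommGroup X] [NormedSpace ℂ X] [CompleteSpace X]

/-- `T - λ I`. -/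
noncomputable def lam (T : X →L[ℂ] X) (l : ℂ) : X →L[ℂ] X := T - l • (1 : X →L[ℂ] X)

/-- `T` maps the range of `T ^ n` into itself. -/
theorem maps_range_pow (T : X →L[ℂ] X) (n : ℕ) :
    ∀ x ∈ LinearMap.range (((T ^ n) : X →L[ℂ] X) : X →ₗ[ℂ] X), (T : X →ₗ[ℂ] X) x ∈ LinearMap.range (((T ^ n) : X →L[ℂ] X) : X →ₗ[ℂ] X) := by
  rintro x ⟨y, rfl⟩
  refine ⟨T y, ?_⟩
  have h : T ^ n * T = T * T ^ n := by rw [← pow_succ, ← pow_succ']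
  calc (T ^ n) (T y) = (T ^ n * T) y := (ContinuousLinearMap.mul_apply _ _ _).symm
    _ = (T * T ^ n) y := by rw [h]
    _ = T ((T ^ n) y) := ContinuousLinearMap.mul_apply _ _ _

/-- The restriction `T_[n]` of `T` to the range of `T ^ n`. -/
noncomputable def restr (T : X →L[ℂ] X) (n : ℕ) :
    LinearMap.range (((T ^ n) : X →L[ℂ] X) : X →ₗ[ℂ] X) →ₗ[ℂ] LinearMap.range (((T ^ n) : X →L[ℂ] X) : X →ₗ[ℂ] X) :=
  (T : X →ₗ[ℂ] X).restrict (maps_range_pow T n)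

/-- Weyl operator: Fredholm of index `0`. -/
def IsWeyl (T : X →L[ℂ] X) : Prop :=
  IsClosed ((LinearMap.range (((T) : X →L[ℂ] X) : X →ₗ[ℂ] X) : Submodule ℂ X) : Set X) ∧
  FiniteDimensional ℂ (LinearMap.ker (((T) : X →L[ℂ] X) : X →ₗ[ℂ] X)) ∧
  FiniteDimensional ℂ (X ⧸ LinearMap.range (((T) : X →L[ℂ] X) : X →ₗ[ℂ] X)) ∧
  finrank ℂ (LinearMap.ker (((T) : X →L[ℂ] X) : X →ₗ[ℂ] X)) = finrank ℂ (X ⧸ LinearMap.range (((T) : X →L[ℂ] X) : X →ₗ[ℂ] X))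

/-- B-Weyl operator: for some `n`, `R(T^n)` is closed and `T_[n]` is Fredholm of index `0`. -/
def IsBWeyl (T : X →L[ℂ] X) : Prop :=
  ∃ n : ℕ, IsClosed ((LinearMap.range (((T ^ n) : X →L[ℂ] X) : X →ₗ[ℂ] X) : Submodule ℂ X) : Set X) ∧
    IsClosed ((LinearMap.range (((T ^ (n + 1)) : X →L[ℂ] X) : X →ₗ[ℂ] X) : Submodule ℂ X) : Set X) ∧
    FiniteDimensional ℂ (LinearMap.ker (restr T n)) ∧
    FiniteDimensional ℂ (↥(LinearMap.range (((T ^ n) : X →L[ℂ] X) : X →ₗ[ℂ] X)) ⧸ LinearMap.range (restr T n)) ∧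
    finrank ℂ (LinearMap.ker (restr T n)) =
      finrank ℂ (↥(LinearMap.range (((T ^ n) : X →L[ℂ] X) : X →ₗ[ℂ] X)) ⧸ LinearMap.range (restr T n))

/-- Weyl spectrum. -/
noncomputable def σW (T : X →L[ℂ] X) : Set ℂ := {l | ¬ IsWeyl (lam T l)}

/-- B-Weyl spectrum. -/
noncomputable def σBW (T : X →L[ℂ] X) : Set ℂ := {l | ¬ IsBWeyl (lam T l)}

/-- `l` is an isolated point of the set `s`. -/
def IsolatedIn (l : ℂ) (s : Set ℂ) : Prop := l ∈ s ∧ ∃ U ∈ nhds l, U ∩ s = {l}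

/-- Approximate point spectrum: `T - λ` is not bounded below. -/
noncomputable def σa (T : X →L[ℂ] X) : Set ℂ :=
  {l | ¬ ∃ c > (0 : ℝ), ∀ x : X, c * ‖x‖ ≤ ‖lam T l x‖}

/-- Eigenvalues of `T` isolated in the spectrum. -/
noncomputable def Espec (T : X →L[ℂ] X) : Set ℂ :=
  {l | LinearMap.ker (((lam T l) : X →L[ℂ] X) : X →ₗ[ℂ] X) ≠ ⊥ ∧ IsolatedIn l (spectrum ℂ T)}

/-- Eigenvalues of finite multiplicity isolated in the spectrum. -/
noncomputable def E0spec (T : X →L[ℂ] X) : Set ℂ :=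
  {l | l ∈ Espec T ∧ FiniteDimensional ℂ (LinearMap.ker (((lam T l) : X →L[ℂ] X) : X →ₗ[ℂ] X))}

/-- Eigenvalues of `T` isolated in the approximate point spectrum. -/
noncomputable def Ea (T : X →L[ℂ] X) : Set ℂ :=
  {l | LinearMap.ker (((lam T l) : X →L[ℂ] X) : X →ₗ[ℂ] X) ≠ ⊥ ∧ IsolatedIn l (σa T)}

/-- Eigenvalues of finite multiplicity isolated in the approximate point spectrum. -/
noncomputable def Ea0 (T : X →L[ℂ] X) : Set ℂ :=
  {l | l ∈ Ea T ∧ FiniteDimensional ℂ (LinearMap.ker (((lam T l) : X →L[ℂ] X) : X →ₗ[ℂ] X))}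

/-- The kernels of powers of `S` stabilize at `n` (ascent ≤ n). -/
def KerStab (S : X →L[ℂ] X) (n : ℕ) : Prop :=
  LinearMap.ker (((S ^ n) : X →L[ℂ] X) : X →ₗ[ℂ] X) = LinearMap.ker (((S ^ (n + 1)) : X →L[ℂ] X) : X →ₗ[ℂ] X)

/-- The ranges of powers of `S` stabilize at `n` (descent ≤ n). -/
def RanStab (S : X →L[ℂ] X) (n : ℕ) : Prop :=
  LinearMap.range (((S ^ n) : X →L[ℂ] X) : X →ₗ[ℂ] X) = LinearMap.range (((S ^ (n + 1)) : X →L[ℂ] X) : X →ₗ[ℂ] X)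

/-- Drazin invertible: finite ascent and finite descent. -/
def IsDrazinInv (S : X →L[ℂ] X) : Prop :=
  (∃ n, KerStab S n) ∧ (∃ n, RanStab S n)

/-- `l` is a pole of the resolvent of `T`. -/
noncomputable def IsPole (T : X →L[ℂ] X) (l : ℂ) : Prop :=
  l ∈ spectrum ℂ T ∧ IsDrazinInv (lam T l)

/-- Set of poles of the resolvent of `T`. -/
noncomputable def Poles (T : X →L[ℂ] X) : Set ℂ := {l | IsPole T l}

/-- Set of poles of finite rank of `T`. -/
noncomputable def Poles0 (T : X →L[ℂ] X) : Set ℂ :=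
  {l | IsPole T l ∧ FiniteDimensional ℂ (LinearMap.ker (((lam T l) : X →L[ℂ] X) : X →ₗ[ℂ] X))}

/-- Drazin spectrum. -/
noncomputable def σD (T : X →L[ℂ] X) : Set ℂ := {l | ¬ IsDrazinInv (lam T l)}

/-- Browder operator: Fredholm of finite ascent and descent. -/
def IsBrowder (S : X →L[ℂ] X) : Prop :=
  IsClosed ((LinearMap.range (((S) : X →L[ℂ] X) : X →ₗ[ℂ] X) : Submodule ℂ X) : Set X) ∧
  FiniteDimensional ℂ (LinearMap.ker (((S) : X →L[ℂ] X) : X →ₗ[ℂ] X)) ∧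
  FiniteDimensional ℂ (X ⧸ LinearMap.range (((S) : X →L[ℂ] X) : X →ₗ[ℂ] X)) ∧
  (∃ n, KerStab S n) ∧ (∃ n, RanStab S n)

/-- Browder spectrum. -/
noncomputable def σB (T : X →L[ℂ] X) : Set ℂ := {l | ¬ IsBrowder (lam T l)}

/-- Upper semi-Weyl: upper semi-Fredholm with index ≤ 0. -/
def IsUpperSemiWeyl (S : X →L[ℂ] X) : Prop :=
  IsClosed ((LinearMap.range (((S) : X →L[ℂ] X) : X →ₗ[ℂ] X) : Submodule ℂ X) : Set X) ∧
  FiniteDimensional ℂ (LinearMap.ker (((S) : X →L[ℂ] X) : X →ₗ[ℂ] X)) ∧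
  Module.rank ℂ (LinearMap.ker (((S) : X →L[ℂ] X) : X →ₗ[ℂ] X)) ≤ Module.rank ℂ (X ⧸ LinearMap.range (((S) : X →L[ℂ] X) : X →ₗ[ℂ] X))

/-- Upper semi-Weyl spectrum `σ_{SF₊⁻}`. -/
noncomputable def σSF (T : X →L[ℂ] X) : Set ℂ := {l | ¬ IsUpperSemiWeyl (lam T l)}

/-- Upper semi-B-Weyl: for some `n`, `R(S^n)` is closed and `S_[n]` is
upper semi-Fredholm with index ≤ 0. -/
def IsUpperSemiBWeyl (S : X →L[ℂ] X) : Prop :=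
  ∃ n : ℕ, IsClosed ((LinearMap.range (((S ^ n) : X →L[ℂ] X) : X →ₗ[ℂ] X) : Submodule ℂ X) : Set X) ∧
    IsClosed ((LinearMap.range (((S ^ (n + 1)) : X →L[ℂ] X) : X →ₗ[ℂ] X) : Submodule ℂ X) : Set X) ∧
    FiniteDimensional ℂ (LinearMap.ker (restr S n)) ∧
    Module.rank ℂ (LinearMap.ker (restr S n)) ≤
      Module.rank ℂ (↥(LinearMap.range (((S ^ n) : X →L[ℂ] X) : X →ₗ[ℂ] X)) ⧸ LinearMap.range (restr S n))

/-- Upper semi-B-Weyl spectrum `σ_{SBF₊⁻}`. -/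
noncomputable def σSBF (T : X →L[ℂ] X) : Set ℂ := {l | ¬ IsUpperSemiBWeyl (lam T l)}

/-- `l` is a left pole of `T`: `l ∈ σ_a(T)`, the ascent `a` of `T - l` is finite
and `R((T-l)^{a+1})` is closed. -/
noncomputable def IsLeftPole (T : X →L[ℂ] X) (l : ℂ) : Prop :=
  l ∈ σa T ∧ ∃ n : ℕ, KerStab (lam T l) n ∧ (∀ m < n, ¬ KerStab (lam T l) m) ∧
    IsClosed ((LinearMap.range ((((lam T l) ^ (n + 1)) : X →L[ℂ] X) : X →ₗ[ℂ] X) : Submodule ℂ X) : Set X)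

/-- Set of left poles of `T`. -/
noncomputable def PolesA (T : X →L[ℂ] X) : Set ℂ := {l | IsLeftPole T l}

/-- Set of left poles of `T` of finite rank. -/
noncomputable def PolesA0 (T : X →L[ℂ] X) : Set ℂ :=
  {l | IsLeftPole T l ∧ FiniteDimensional ℂ (LinearMap.ker (((lam T l) : X →L[ℂ] X) : X →ₗ[ℂ] X))}

end SpectralPartition


namespace SpectralPartition

variable {X : Type*} [NormedAddCommGroup X] [NormedSpace ℂ X] [CompleteSpace X]

set_option linter.unusedSectionVars false
set_option maxHeartbeats 1000000

lemma pow_succ_apply' (S : X →L[ℂ] X) (n : ℕ) (x : X) : (S ^ (n+1)) x = (S ^ n) (S x) := by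
  rw [pow_succ, ContinuousLinearMap.mul_apply]

lemma pow_succ'_apply' (S : X →L[ℂ] X) (n : ℕ) (x : X) : (S ^ (n+1)) x = S ((S ^ n) x) := by
  rw [pow_succ', ContinuousLinearMap.mul_apply]

lemma pow_add_apply' (S : X →L[ℂ] X) (a b : ℕ) (x : X) :
    (S ^ (a + b)) x = (S ^ a) ((S ^ b) x) := by
  rw [pow_add, ContinuousLinearMap.mul_apply]

lemma pow_inj (S : X →L[ℂ] X) (hinj : Function.Injective S) (m : ℕ) :
    Function.Injective (S ^ m) := by
  induction m with
  | zero => simpa [pow_zero] using Function.injective_id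
  | succ k ih =>
    intro a b hab
    rw [pow_succ_apply', pow_succ_apply'] at hab
    exact hinj (ih hab)

lemma kerstab_succ (S : X →L[ℂ] X) (n : ℕ) (h : LinearMap.ker (((S ^ n) : X →L[ℂ] X) : X →ₗ[ℂ] X) = LinearMap.ker (((S ^ (n+1)) : X →L[ℂ] X) : X →ₗ[ℂ] X)) :
    LinearMap.ker (((S ^ (n+1)) : X →L[ℂ] X) : X →ₗ[ℂ] X) = LinearMap.ker (((S ^ (n+2)) : X →L[ℂ] X) : X →ₗ[ℂ] X) := by
  apply le_antisymm
  · intro x hx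
    simp only [LinearMap.mem_ker, ContinuousLinearMap.coe_coe] at *
    rw [pow_succ'_apply', hx, map_zero]
  · intro x hx
    simp only [LinearMap.mem_ker, ContinuousLinearMap.coe_coe] at *
    have h1 : (S ^ (n+1)) (S x) = 0 := by rw [← pow_succ_apply']; exact hx
    have h2 : S x ∈ LinearMap.ker (((S ^ n) : X →L[ℂ] X) : X →ₗ[ℂ] X) := h ▸ LinearMap.mem_ker.mpr h1
    rw [pow_succ_apply']
    exact LinearMap.mem_ker.mp h2

lemma ranstab_succ (S : X →L[ℂ] X) (n : ℕ)
    (h : LinearMap.range (((S ^ n) : X →L[ℂ] X) : X →ₗ[ℂ] X) = LinearMap.range (((S ^ (n+1)) : X →L[ℂ] X) : X →ₗ[ℂ] X)) :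
    LinearMap.range (((S ^ (n+1)) : X →L[ℂ] X) : X →ₗ[ℂ] X) = LinearMap.range (((S ^ (n+2)) : X →L[ℂ] X) : X →ₗ[ℂ] X) := by
  apply le_antisymm
  · rintro _ ⟨x, rfl⟩
    have : (S ^ n) x ∈ LinearMap.range (((S ^ (n+1)) : X →L[ℂ] X) : X →ₗ[ℂ] X) := h ▸ LinearMap.mem_range_self _ x
    obtain ⟨z, hz⟩ := this
    exact ⟨z, by simp only [ContinuousLinearMap.coe_coe] at hz ⊢; rw [pow_succ'_apply' S (n+1), hz, ← pow_succ'_apply']⟩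
  · rintro _ ⟨x, rfl⟩
    exact ⟨S x, (pow_succ_apply' S (n+1) x).symm⟩

lemma kerstab_ge (S : X →L[ℂ] X) {n m : ℕ} (h : LinearMap.ker (((S ^ n) : X →L[ℂ] X) : X →ₗ[ℂ] X) = LinearMap.ker (((S ^ (n+1)) : X →L[ℂ] X) : X →ₗ[ℂ] X))
    (hnm : n ≤ m) : LinearMap.ker (((S ^ m) : X →L[ℂ] X) : X →ₗ[ℂ] X) = LinearMap.ker (((S ^ (m+1)) : X →L[ℂ] X) : X →ₗ[ℂ] X) := by
  induction m with
  | zero => simpa [Nat.le_zero.mp hnm] using h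
  | succ k ih =>
    rcases Nat.lt_or_ge n (k+1) with hl | hg
    · exact kerstab_succ S k (ih (Nat.lt_succ_iff.mp hl))
    · have : n = k + 1 := le_antisymm hnm hg
      simpa [this] using h

lemma ranstab_ge (S : X →L[ℂ] X) {n m : ℕ}
    (h : LinearMap.range (((S ^ n) : X →L[ℂ] X) : X →ₗ[ℂ] X) = LinearMap.range (((S ^ (n+1)) : X →L[ℂ] X) : X →ₗ[ℂ] X))
    (hnm : n ≤ m) : LinearMap.range (((S ^ m) : X →L[ℂ] X) : X →ₗ[ℂ] X) = LinearMap.range (((S ^ (m+1)) : X →L[ℂ] X) : X →ₗ[ℂ] X) := by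
  induction m with
  | zero => simpa [Nat.le_zero.mp hnm] using h
  | succ k ih =>
    rcases Nat.lt_or_ge n (k+1) with hl | hg
    · exact ranstab_succ S k (ih (Nat.lt_succ_iff.mp hl))
    · have : n = k + 1 := le_antisymm hnm hg
      simpa [this] using h

lemma kerstab_add (S : X →L[ℂ] X) {n : ℕ}
    (h : LinearMap.ker (((S ^ n) : X →L[ℂ] X) : X →ₗ[ℂ] X) = LinearMap.ker (((S ^ (n+1)) : X →L[ℂ] X) : X →ₗ[ℂ] X)) (k : ℕ) :
    LinearMap.ker (((S ^ n) : X →L[ℂ] X) : X →ₗ[ℂ] X) = LinearMap.ker (((S ^ (n+k)) : X →L[ℂ] X) : X →ₗ[ℂ] X) := by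
  induction k with
  | zero => rfl
  | succ j ih => exact ih.trans (kerstab_ge S h (Nat.le_add_right n j))

lemma ranstab_add (S : X →L[ℂ] X) {n : ℕ}
    (h : LinearMap.range (((S ^ n) : X →L[ℂ] X) : X →ₗ[ℂ] X) = LinearMap.range (((S ^ (n+1)) : X →L[ℂ] X) : X →ₗ[ℂ] X)) (k : ℕ) :
    LinearMap.range (((S ^ n) : X →L[ℂ] X) : X →ₗ[ℂ] X) = LinearMap.range (((S ^ (n+k)) : X →L[ℂ] X) : X →ₗ[ℂ] X) := by
  induction k with
  | zero => rfl
  | succ j ih => exact ih.trans (ranstab_ge S h (Nat.le_add_right n j))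

lemma fd_ker_pow (S : X →L[ℂ] X) (hfd : FiniteDimensional ℂ (LinearMap.ker (((S) : X →L[ℂ] X) : X →ₗ[ℂ] X))) (n : ℕ) :
    FiniteDimensional ℂ (LinearMap.ker (((S ^ n) : X →L[ℂ] X) : X →ₗ[ℂ] X)) := by
  induction n with
  | zero =>
    have : LinearMap.ker (((S ^ 0) : X →L[ℂ] X) : X →ₗ[ℂ] X) = ⊥ := by
      ext x; simp [pow_zero, LinearMap.mem_ker]
    rw [this]; infer_instance
  | succ k ih =>
    set K := LinearMap.ker (((S ^ (k+1)) : X →L[ℂ] X) : X →ₗ[ℂ] X) with hK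
    let g : K →ₗ[ℂ] X := (S : X →ₗ[ℂ] X).comp K.subtype
    have hrange : LinearMap.range g ≤ LinearMap.ker (((S ^ k) : X →L[ℂ] X) : X →ₗ[ℂ] X) := by
      rintro _ ⟨⟨x, hx⟩, rfl⟩
      have : (S ^ (k+1)) x = 0 := hx
      show (S ^ k) (S x) = 0; rw [← pow_succ_apply']; exact this
    have hker : LinearMap.ker g ≤ (LinearMap.ker (((S) : X →L[ℂ] X) : X →ₗ[ℂ] X)).comap K.subtype := by
      intro x hx
      simpa [g, LinearMap.mem_ker, Submodule.mem_comap] using hx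
    have fd1 : FiniteDimensional ℂ (LinearMap.range g) :=
      Submodule.finiteDimensional_of_le hrange
    have fd2 : FiniteDimensional ℂ ((LinearMap.ker (((S) : X →L[ℂ] X) : X →ₗ[ℂ] X)).comap K.subtype) := by
      haveI : FiniteDimensional ℂ ↥(LinearMap.ker (((S) : X →L[ℂ] X) : X →ₗ[ℂ] X) ⊓ K) :=
        Submodule.finiteDimensional_of_le inf_le_left
      have e := (Submodule.comapSubtypeEquivOfLe (p := LinearMap.ker (((S) : X →L[ℂ] X) : X →ₗ[ℂ] X) ⊓ K) (q := K)
        inf_le_right)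
      have heq : (LinearMap.ker (((S) : X →L[ℂ] X) : X →ₗ[ℂ] X)).comap K.subtype = (LinearMap.ker (((S) : X →L[ℂ] X) : X →ₗ[ℂ] X) ⊓ K).comap K.subtype := by
        ext ⟨x, hx⟩; simp [Submodule.mem_comap, hx]
      rw [heq]
      exact e.symm.finiteDimensional
    have fd3 : FiniteDimensional ℂ (LinearMap.ker g) :=
      Submodule.finiteDimensional_of_le hker
    have hr := g.rank_range_add_rank_ker
    exact Module.rank_lt_aleph0_iff.mp
      (hr ▸ Cardinal.add_lt_aleph0 (Module.rank_lt_aleph0 _ _) (Module.rank_lt_aleph0 _ _))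

lemma surj_of_inj_ranstab (S : X →L[ℂ] X) (hinj : Function.Injective S) {m : ℕ}
    (h : LinearMap.range (((S ^ m) : X →L[ℂ] X) : X →ₗ[ℂ] X) = LinearMap.range (((S ^ (m+1)) : X →L[ℂ] X) : X →ₗ[ℂ] X)) :
    Function.Surjective S := by
  intro x
  have : (S ^ m) x ∈ LinearMap.range (((S ^ (m+1)) : X →L[ℂ] X) : X →ₗ[ℂ] X) := h ▸ LinearMap.mem_range_self _ x
  obtain ⟨y, hy⟩ := this
  refine ⟨y, pow_inj S hinj m ?_⟩
  rw [← pow_succ_apply']; exact hy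

lemma closed_range_of_fd (S : X →L[ℂ] X) (hk : FiniteDimensional ℂ (LinearMap.ker (((S) : X →L[ℂ] X) : X →ₗ[ℂ] X)))
    (hc : FiniteDimensional ℂ (X ⧸ LinearMap.range (((S) : X →L[ℂ] X) : X →ₗ[ℂ] X))) :
    IsClosed ((LinearMap.range (((S) : X →L[ℂ] X) : X →ₗ[ℂ] X) : Submodule ℂ X) : Set X) := by
  obtain ⟨Z, hZc, hZcompl⟩ :=
    (Submodule.ClosedComplemented.of_finiteDimensional (LinearMap.ker (((S) : X →L[ℂ] X) : X →ₗ[ℂ] X))).exists_isClosed_isCompl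
  obtain ⟨W, hW⟩ := Submodule.exists_isCompl (LinearMap.range (((S) : X →L[ℂ] X) : X →ₗ[ℂ] X))
  haveI : FiniteDimensional ℂ W :=
    (Submodule.quotientEquivOfIsCompl _ W hW).finiteDimensional
  have hWclosed : IsClosed (W : Set X) := W.closed_of_finiteDimensional
  haveI : CompleteSpace Z := hZc.completeSpace_coe
  haveI : CompleteSpace W := hWclosed.completeSpace_coe
  set Φ : (Z × W) →L[ℂ] X := (S.comp Z.subtypeL).coprod W.subtypeL with hΦ
  have happ : ∀ z : Z, ∀ w : W, Φ (z, w) = S z + w := fun z w => rfl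
  have hinj : LinearMap.ker ((Φ : (Z × W) →L[ℂ] X) : (Z × W) →ₗ[ℂ] X) = ⊥ := by
    rw [LinearMap.ker_eq_bot']
    rintro ⟨z, w⟩ h
    have h0 : S (z : X) + (w : X) = 0 := h
    have hm : S (z : X) ∈ LinearMap.range (((S) : X →L[ℂ] X) : X →ₗ[ℂ] X) ⊓ W := by
      constructor
      · exact LinearMap.mem_range_self _ _
      · have : S (z : X) = -(w : X) := eq_neg_of_add_eq_zero_left h0
        rw [this]; exact W.neg_mem w.2
    have hSz : S (z : X) = 0 := by
      have := hW.inf_eq_bot ▸ hm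
      simpa using this
    have hw : (w : X) = 0 := by rw [hSz, zero_add] at h0; exact h0
    have hz : (z : X) = 0 := by
      have hmz : (z : X) ∈ LinearMap.ker (((S) : X →L[ℂ] X) : X →ₗ[ℂ] X) ⊓ Z := ⟨hSz, z.2⟩
      have := hZcompl.inf_eq_bot ▸ hmz
      simpa using this
    ext
    · exact hz
    · exact hw
  have hsurj : LinearMap.range ((Φ : (Z × W) →L[ℂ] X) : (Z × W) →ₗ[ℂ] X) = ⊤ := by
    rw [LinearMap.range_eq_top]
    intro x
    have hx : x ∈ LinearMap.range (((S) : X →L[ℂ] X) : X →ₗ[ℂ] X) ⊔ W := by rw [hW.sup_eq_top]; trivial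
    obtain ⟨r, hr, w, hw, rfl⟩ := Submodule.mem_sup.mp hx
    obtain ⟨y, rfl⟩ := hr
    have hy : y ∈ LinearMap.ker (((S) : X →L[ℂ] X) : X →ₗ[ℂ] X) ⊔ Z := by rw [hZcompl.sup_eq_top]; trivial
    obtain ⟨k, hk, z, hz, rfl⟩ := Submodule.mem_sup.mp hy
    refine ⟨(⟨z, hz⟩, ⟨w, hw⟩), ?_⟩
    rw [ContinuousLinearMap.coe_coe, happ]
    simp only [map_add]
    rw [LinearMap.mem_ker.mp hk]
    simp
  let e := ContinuousLinearEquiv.ofBijective Φ hinj hsurj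
  have hset : ((LinearMap.range (((S) : X →L[ℂ] X) : X →ₗ[ℂ] X) : Submodule ℂ X) : Set X) =
      e '' ((Set.univ : Set Z) ×ˢ ({0} : Set W)) := by
    ext x
    constructor
    · rintro ⟨y, rfl⟩
      have hy : y ∈ LinearMap.ker (((S) : X →L[ℂ] X) : X →ₗ[ℂ] X) ⊔ Z := by rw [hZcompl.sup_eq_top]; trivial
      obtain ⟨k, hk, z, hz, rfl⟩ := Submodule.mem_sup.mp hy
      refine ⟨(⟨z, hz⟩, 0), by simp, ?_⟩
      show Φ _ = _
      rw [happ]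
      simp only [map_add, Submodule.coe_zero, add_zero]
      rw [LinearMap.mem_ker.mp hk]
      simp
    · rintro ⟨⟨z, w⟩, ⟨-, hw⟩, rfl⟩
      have hw0 : w = 0 := hw
      show Φ _ ∈ _
      rw [happ, hw0]
      simpa using LinearMap.mem_range_self S (z : X)
  rw [hset]
  exact e.toHomeomorph.isClosedMap _ (isClosed_univ.prod isClosed_singleton)

lemma drazin_weyl (S : X →L[ℂ] X)
    (hker : ∃ n, LinearMap.ker (((S ^ n) : X →L[ℂ] X) : X →ₗ[ℂ] X) = LinearMap.ker (((S ^ (n+1)) : X →L[ℂ] X) : X →ₗ[ℂ] X))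
    (hran : ∃ n, LinearMap.range (((S ^ n) : X →L[ℂ] X) : X →ₗ[ℂ] X) = LinearMap.range (((S ^ (n+1)) : X →L[ℂ] X) : X →ₗ[ℂ] X))
    (hfd : FiniteDimensional ℂ (LinearMap.ker (((S) : X →L[ℂ] X) : X →ₗ[ℂ] X))) :
    IsClosed ((LinearMap.range (((S) : X →L[ℂ] X) : X →ₗ[ℂ] X) : Submodule ℂ X) : Set X) ∧
    FiniteDimensional ℂ (X ⧸ LinearMap.range (((S) : X →L[ℂ] X) : X →ₗ[ℂ] X)) ∧
    finrank ℂ (LinearMap.ker (((S) : X →L[ℂ] X) : X →ₗ[ℂ] X)) = finrank ℂ (X ⧸ LinearMap.range (((S) : X →L[ℂ] X) : X →ₗ[ℂ] X)) := by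
  obtain ⟨n, hn⟩ := hker
  obtain ⟨m, hm⟩ := hran
  set r := max n m with hr
  have hkq : LinearMap.ker (((S ^ (r+1)) : X →L[ℂ] X) : X →ₗ[ℂ] X) = LinearMap.ker (((S ^ (r+2)) : X →L[ℂ] X) : X →ₗ[ℂ] X) :=
    kerstab_ge S hn ((le_max_left n m).trans (Nat.le_succ r))
  have hrq : LinearMap.range (((S ^ (r+1)) : X →L[ℂ] X) : X →ₗ[ℂ] X) = LinearMap.range (((S ^ (r+2)) : X →L[ℂ] X) : X →ₗ[ℂ] X) :=
    ranstab_ge S hm ((le_max_right n m).trans (Nat.le_succ r))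
  set K := LinearMap.ker (((S ^ (r+1)) : X →L[ℂ] X) : X →ₗ[ℂ] X) with hK
  set R := LinearMap.range (((S ^ (r+1)) : X →L[ℂ] X) : X →ₗ[ℂ] X) with hR
  haveI fdK : FiniteDimensional ℂ K := fd_ker_pow S hfd (r+1)
  have hkerle : LinearMap.ker (((S) : X →L[ℂ] X) : X →ₗ[ℂ] X) ≤ K := by
    intro x hx
    show (S ^ (r+1)) x = 0
    rw [pow_succ_apply', show S x = 0 from LinearMap.mem_ker.mp hx, map_zero]
  have hranle : R ≤ LinearMap.range (((S) : X →L[ℂ] X) : X →ₗ[ℂ] X) := by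
    rintro _ ⟨y, rfl⟩
    exact ⟨(S ^ r) y, (pow_succ'_apply' S r y).symm⟩
  have disj : K ⊓ R = ⊥ := by
    rw [eq_bot_iff]
    rintro x ⟨hxK, hxR⟩
    obtain ⟨y, rfl⟩ := hxR
    have h2 : (S ^ ((r+1) + (r+1))) y = 0 := by
      rw [pow_add_apply']; exact hxK
    have : y ∈ LinearMap.ker (((S ^ (r+1)) : X →L[ℂ] X) : X →ₗ[ℂ] X) := by
      rw [kerstab_add S hkq (r+1)]; exact h2
    simpa using LinearMap.mem_ker.mp this
  have sup : K ⊔ R = ⊤ := by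
    rw [eq_top_iff]
    intro x _
    have : (S ^ (r+1)) x ∈ LinearMap.range (((S ^ ((r+1)+(r+1))) : X →L[ℂ] X) : X →ₗ[ℂ] X) := by
      rw [← ranstab_add S hrq (r+1)]
      exact LinearMap.mem_range_self _ x
    obtain ⟨y, hy⟩ := this
    rw [ContinuousLinearMap.coe_coe] at hy
    have hz : (S ^ (r+1)) y ∈ R := LinearMap.mem_range_self _ y
    have hxz : x - (S ^ (r+1)) y ∈ K := by
      show (S ^ (r+1)) (x - (S ^ (r+1)) y) = 0
      rw [map_sub, ← pow_add_apply', hy, sub_eq_zero]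
    exact Submodule.mem_sup.mpr ⟨_, hxz, _, hz, by abel⟩
  have hSK_K : K.map (S : X →ₗ[ℂ] X) ≤ K := by
    rintro _ ⟨x, hx, rfl⟩
    show (S ^ (r+1)) (S x) = 0
    rw [← pow_succ_apply', pow_succ'_apply', show ((S ^ (r+1)) x) = 0 from hx, map_zero]
  have mapSK : K ⊓ LinearMap.range (((S) : X →L[ℂ] X) : X →ₗ[ℂ] X) = K.map (S : X →ₗ[ℂ] X) := by
    apply le_antisymm
    · rintro x ⟨hxK, y, rfl⟩
      have hy : y ∈ K ⊔ R := by rw [sup]; trivial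
      obtain ⟨k, hk, z, hz, rfl⟩ := Submodule.mem_sup.mp hy
      obtain ⟨w, rfl⟩ := hz
      have hSz : S ((S ^ (r+1)) w) ∈ R := by
        show S ((S ^ (r+1)) w) ∈ R
        rw [hrq]
        exact ⟨w, pow_succ'_apply' S (r+1) w⟩
      have hSk : S k ∈ K := hSK_K ⟨k, hk, rfl⟩
      have hdiff : S (k + (S ^ (r+1)) w) - S k ∈ K ⊓ R := by
        constructor
        · exact K.sub_mem hxK hSk
        · rw [map_add, add_sub_cancel_left]; exact hSz
      rw [disj] at hdiff
      have : S (k + (S ^ (r+1)) w) = S k := by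
        have := (Submodule.mem_bot ℂ).mp hdiff
        rwa [sub_eq_zero] at this
      simp only [ContinuousLinearMap.coe_coe]
      rw [this]
      exact ⟨k, hk, rfl⟩
    · rintro _ ⟨k, hk, rfl⟩
      exact ⟨hSK_K ⟨k, hk, rfl⟩, ⟨k, rfl⟩⟩
  let φ : K →ₗ[ℂ] (X ⧸ LinearMap.range (((S) : X →L[ℂ] X) : X →ₗ[ℂ] X)) := (LinearMap.range (((S) : X →L[ℂ] X) : X →ₗ[ℂ] X)).mkQ.comp K.subtype
  have hφsurj : Function.Surjective φ := by
    intro c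
    obtain ⟨x, rfl⟩ := Submodule.mkQ_surjective _ c
    have hx : x ∈ K ⊔ R := by rw [sup]; trivial
    obtain ⟨k, hk, z, hz, rfl⟩ := Submodule.mem_sup.mp hx
    refine ⟨⟨k, hk⟩, ?_⟩
    show Submodule.mkQ _ k = Submodule.mkQ _ (k + z)
    rw [Submodule.mkQ_apply, Submodule.mkQ_apply, Submodule.Quotient.eq]
    simpa using Submodule.neg_mem _ (hranle hz)
  haveI fdcoker : FiniteDimensional ℂ (X ⧸ LinearMap.range (((S) : X →L[ℂ] X) : X →ₗ[ℂ] X)) :=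
    Module.Finite.of_surjective φ hφsurj
  refine ⟨closed_range_of_fd S hfd fdcoker, fdcoker, ?_⟩
  have hrn1 : finrank ℂ (LinearMap.range φ) + finrank ℂ (LinearMap.ker φ) = finrank ℂ K :=
    φ.finrank_range_add_finrank_ker
  have hrangeφ : LinearMap.range φ = ⊤ := LinearMap.range_eq_top.mpr hφsurj
  have h1 : finrank ℂ (X ⧸ LinearMap.range (((S) : X →L[ℂ] X) : X →ₗ[ℂ] X)) + finrank ℂ (LinearMap.ker φ) = finrank ℂ K := by
    rw [← hrn1, hrangeφ, finrank_top]
  let ψ : K →ₗ[ℂ] X := (S : X →ₗ[ℂ] X).comp K.subtype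
  have hrn2 : finrank ℂ (LinearMap.range ψ) + finrank ℂ (LinearMap.ker ψ) = finrank ℂ K :=
    ψ.finrank_range_add_finrank_ker
  have hrangeψ : LinearMap.range ψ = K.map (S : X →ₗ[ℂ] X) := by
    rw [LinearMap.range_comp, Submodule.range_subtype]
  have hkerψ : LinearMap.ker ψ = (LinearMap.ker (((S) : X →L[ℂ] X) : X →ₗ[ℂ] X)).comap K.subtype := by
    ext x
    simp [ψ, LinearMap.mem_ker, Submodule.mem_comap]
  have h2 : finrank ℂ (LinearMap.ker ψ) = finrank ℂ (LinearMap.ker (((S) : X →L[ℂ] X) : X →ₗ[ℂ] X)) := by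
    rw [hkerψ]
    exact (Submodule.comapSubtypeEquivOfLe hkerle).finrank_eq
  have hkerφ : LinearMap.ker φ = (LinearMap.range (((S) : X →L[ℂ] X) : X →ₗ[ℂ] X)).comap K.subtype := by
    ext x
    simp [φ, LinearMap.mem_ker, Submodule.mem_comap, Submodule.mkQ_apply,
      Submodule.Quotient.mk_eq_zero]
  have h3 : finrank ℂ (LinearMap.ker φ) = finrank ℂ (LinearMap.range ψ) := by
    rw [hkerφ, hrangeψ]
    have e1 := Submodule.equivMapOfInjective K.subtype (Submodule.injective_subtype K)
      ((LinearMap.range (((S) : X →L[ℂ] X) : X →ₗ[ℂ] X)).comap K.subtype)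
    have e2 : ((LinearMap.range (((S) : X →L[ℂ] X) : X →ₗ[ℂ] X)).comap K.subtype).map K.subtype =
        K ⊓ LinearMap.range (((S) : X →L[ℂ] X) : X →ₗ[ℂ] X) := Submodule.map_comap_subtype _ _
    rw [e1.finrank_eq, e2, mapSK]
  omega

lemma isUnit_lam_iff (T : X →L[ℂ] X) (l : ℂ) : IsUnit (lam T l) ↔ l ∉ spectrum ℂ T := by
  rw [spectrum.notMem_iff]
  have h : algebraMap ℂ (X →L[ℂ] X) l - T = -(lam T l) := by
    rw [lam, Algebra.algebraMap_eq_smul_one, neg_sub]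
  rw [h]
  exact ⟨fun hu => hu.neg, fun hu => by simpa using hu.neg⟩

lemma isUnit_of_bijective (S : X →L[ℂ] X) (hinj : Function.Injective S)
    (hsurj : Function.Surjective S) : IsUnit S := by
  have h1 : LinearMap.ker (((S) : X →L[ℂ] X) : X →ₗ[ℂ] X) = ⊥ := LinearMap.ker_eq_bot'.mpr (fun m hm => hinj (by simpa using hm))
  have h2 : LinearMap.range (((S) : X →L[ℂ] X) : X →ₗ[ℂ] X) = ⊤ := LinearMap.range_eq_top.mpr hsurj
  exact ⟨(ContinuousLinearEquiv.ofBijective S h1 h2).toUnit,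
    ContinuousLinearEquiv.coe_ofBijective S h1 h2⟩

lemma not_mem_σa_of_unit (T : X →L[ℂ] X) (l : ℂ) (h : IsUnit (lam T l)) : l ∉ σa T := by
  obtain ⟨u, hu⟩ := h
  intro hmem
  apply hmem
  set v : X →L[ℂ] X := ↑u⁻¹ with hv
  have hvx : ∀ x : X, v (lam T l x) = x := by
    intro x
    have : ((↑u⁻¹ * ↑u : X →L[ℂ] X)) x = x := by
      rw [Units.inv_mul]; rfl
    rw [← hu]
    conv_rhs => rw [← this]
    rw [ContinuousLinearMap.mul_apply]
  refine ⟨(‖v‖ + 1)⁻¹, by positivity, fun x => ?_⟩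
  rw [inv_mul_le_iff₀ (by positivity)]
  calc ‖x‖ = ‖v (lam T l x)‖ := by rw [hvx]
    _ ≤ ‖v‖ * ‖lam T l x‖ := v.le_opNorm _
    _ ≤ (‖v‖ + 1) * ‖lam T l x‖ := by
        apply mul_le_mul_of_nonneg_right (by linarith) (norm_nonneg _)

lemma injective_of_not_mem_σa (T : X →L[ℂ] X) (l : ℂ) (h : l ∉ σa T) :
    Function.Injective (lam T l) := by
  have hex : ∃ c > (0 : ℝ), ∀ x : X, c * ‖x‖ ≤ ‖lam T l x‖ := not_not.mp h
  obtain ⟨c, hc, hb⟩ := hex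
  intro a b hab
  have h0 : lam T l (a - b) = 0 := by rw [map_sub, hab, sub_self]
  have := hb (a - b)
  rw [h0, norm_zero] at this
  have : ‖a - b‖ ≤ 0 := by nlinarith [norm_nonneg (a - b)]
  have : a - b = 0 := norm_le_zero_iff.mp this
  exact sub_eq_zero.mp this
  
lemma mem_σa_of_ker_ne_bot (T : X →L[ℂ] X) (l : ℂ) (h : LinearMap.ker (((lam T l) : X →L[ℂ] X) : X →ₗ[ℂ] X) ≠ ⊥) :
    l ∈ σa T := by
  rintro ⟨c, hc, hb⟩
  obtain ⟨x, hx, hx0⟩ := Submodule.exists_mem_ne_zero_of_ne_bot h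
  have h0 : lam T l x = 0 := hx
  have := hb x
  rw [h0, norm_zero] at this
  have hxnorm : (0 : ℝ) < ‖x‖ := norm_pos_iff.mpr hx0
  nlinarith

lemma weyl_of_unit (S : X →L[ℂ] X) (h : IsUnit S) : IsWeyl S := by
  obtain ⟨u, hu⟩ := h
  have hinj : Function.Injective S := by
    intro a b hab
    have ha : ((↑u⁻¹ * ↑u : X →L[ℂ] X)) a = a := by
      rw [Units.inv_mul]; rfl
    have hbq : ((↑u⁻¹ * ↑u : X →L[ℂ] X)) b = b := by
      rw [Units.inv_mul]; rfl
    rw [← ha, ← hbq, ContinuousLinearMap.mul_apply, ContinuousLinearMap.mul_apply, hu, hab]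
  have hsurj : Function.Surjective S := by
    intro x
    refine ⟨(↑u⁻¹ : X →L[ℂ] X) x, ?_⟩
    have : ((↑u * ↑u⁻¹ : X →L[ℂ] X)) x = x := by
      rw [Units.mul_inv]; rfl
    conv_rhs => rw [← this]
    rw [ContinuousLinearMap.mul_apply, hu]
  have hker : LinearMap.ker (((S) : X →L[ℂ] X) : X →ₗ[ℂ] X) = ⊥ :=
    LinearMap.ker_eq_bot'.mpr (fun m hm => hinj (by simpa using hm))
  have hran : LinearMap.range (((S) : X →L[ℂ] X) : X →ₗ[ℂ] X) = ⊤ := LinearMap.range_eq_top.mpr hsurj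
  haveI hsub : Subsingleton (X ⧸ LinearMap.range (((S) : X →L[ℂ] X) : X →ₗ[ℂ] X)) :=
    Submodule.Quotient.subsingleton_iff.mpr hran
  refine ⟨?_, ?_, ?_, ?_⟩
  · rw [hran, Submodule.top_coe]; exact isClosed_univ
  · rw [hker]; infer_instance
  · exact Module.Finite.of_finite
  · rw [hker]
    rw [finrank_bot, Module.finrank_zero_of_subsingleton]

lemma upperSemiWeyl_of_weyl (S : X →L[ℂ] X) (h : IsWeyl S) : IsUpperSemiWeyl S := by
  obtain ⟨h1, h2, h3, h4⟩ := h
  haveI := h2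
  haveI := h3
  refine ⟨h1, h2, le_of_eq ?_⟩
  rw [← Module.finrank_eq_rank, ← Module.finrank_eq_rank, h4]

lemma poles0_weyl (T : X →L[ℂ] X) (l : ℂ) (h : l ∈ Poles0 T) : IsWeyl (lam T l) := by
  obtain ⟨⟨hσ, hdr⟩, hfd⟩ := h
  obtain ⟨hk, hr⟩ := hdr
  have hdw := drazin_weyl (lam T l) hk hr hfd
  exact ⟨hdw.1, hfd, hdw.2.1, hdw.2.2⟩

lemma poles0_mem_σa (T : X →L[ℂ] X) (l : ℂ) (h : l ∈ Poles0 T) : l ∈ σa T := by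
  by_contra hna
  obtain ⟨⟨hσ, hdr⟩, hfd⟩ := h
  have hinj := injective_of_not_mem_σa T l hna
  obtain ⟨m, hm⟩ := hdr.2
  have hsurj := surj_of_inj_ranstab _ hinj hm
  exact (isUnit_lam_iff T l).mp (isUnit_of_bijective _ hinj hsurj) hσ

end SpectralPartition

open SpectralPartition in
/-- Property (w) versus Browder's theorem. -/
theorem property_w_iff_browder {X : Type*} [NormedAddCommGroup X] [NormedSpace ℂ X]
    [CompleteSpace X] (T : X →L[ℂ] X)
    (hU : σa T = σSF T ∪ E0spec T) (hD : σSF T ∩ E0spec T = ∅) :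
    (spectrum ℂ T = σW T ∪ Poles0 T ∧ σW T ∩ Poles0 T = ∅) ↔
      (σW T \ σSF T = (E0spec T \ Poles0 T) ∪ (spectrum ℂ T \ σa T) ∧
        (E0spec T \ Poles0 T) ∩ (spectrum ℂ T \ σa T) = ∅) := by
  have hWσ : σW T ⊆ spectrum ℂ T := fun l hl => by
    by_contra hns
    exact hl (weyl_of_unit _ ((isUnit_lam_iff T l).mpr hns))
  have haσ : σa T ⊆ spectrum ℂ T := fun l hl => by
    by_contra hns
    exact not_mem_σa_of_unit T l ((isUnit_lam_iff T l).mpr hns) hl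
  have hSsubW : σSF T ⊆ σW T := fun l hl h => hl (upperSemiWeyl_of_weyl _ h)
  have hEa : E0spec T ⊆ σa T := fun l hl => mem_σa_of_ker_ne_bot T l hl.1.1
  have hPσ : Poles0 T ⊆ spectrum ℂ T := fun l hl => hl.1.1
  have hPa : Poles0 T ⊆ σa T := fun l hl => poles0_mem_σa T l hl
  have hPW : ∀ l ∈ Poles0 T, l ∉ σW T := fun l hl hW => hW (poles0_weyl T l hl)
  have hSA : σSF T ⊆ σa T := fun l hl => by rw [hU]; exact Or.inl hl
  constructor
  · rintro ⟨h1, h2⟩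
    constructor
    · ext x
      constructor
      · rintro ⟨hW, hnS⟩
        by_cases hxa : x ∈ σa T
        · have hxE : x ∈ E0spec T := by
            have hx2 : x ∈ σSF T ∪ E0spec T := by rw [← hU]; exact hxa
            rcases hx2 with h | h
            · exact absurd h hnS
            · exact h
          have hxnP : x ∉ Poles0 T := fun hp =>
            Set.eq_empty_iff_forall_notMem.mp h2 x ⟨hW, hp⟩
          exact Or.inl ⟨hxE, hxnP⟩
        · exact Or.inr ⟨hWσ hW, hxa⟩
      · rintro (⟨hE, hnP⟩ | ⟨hσ, hna⟩)
        · have hxσ : x ∈ spectrum ℂ T := haσ (hEa hE)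
          have hx2 : x ∈ σW T ∪ Poles0 T := by rw [← h1]; exact hxσ
          rcases hx2 with h | h
          · exact ⟨h, fun hs => Set.eq_empty_iff_forall_notMem.mp hD x ⟨hs, hE⟩⟩
          · exact absurd h hnP
        · have hx2 : x ∈ σW T ∪ Poles0 T := by rw [← h1]; exact hσ
          rcases hx2 with h | h
          · exact ⟨h, fun hs => hna (hSA hs)⟩
          · exact absurd (hPa h) hna
    · apply Set.eq_empty_iff_forall_notMem.mpr
      rintro x ⟨⟨hE, _⟩, ⟨_, hna⟩⟩
      exact hna (hEa hE)
  · rintro ⟨h1, _h2⟩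
    constructor
    · apply Set.Subset.antisymm
      · intro x hx
        by_cases hW : x ∈ σW T
        · exact Or.inl hW
        have hnS : x ∉ σSF T := fun hs => hW (hSsubW hs)
        by_cases hxa : x ∈ σa T
        · have hxE : x ∈ E0spec T := by
            have hx2 : x ∈ σSF T ∪ E0spec T := by rw [← hU]; exact hxa
            rcases hx2 with h | h
            · exact absurd h hnS
            · exact h
          by_cases hP : x ∈ Poles0 T
          · exact Or.inr hP
          · have hx3 : x ∈ σW T \ σSF T := by rw [h1]; exact Or.inl ⟨hxE, hP⟩
            exact absurd hx3.1 hW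
        · have hx3 : x ∈ σW T \ σSF T := by rw [h1]; exact Or.inr ⟨hx, hxa⟩
          exact absurd hx3.1 hW
      · intro x hx
        rcases hx with h | h
        · exact hWσ h
        · exact hPσ h
    · exact Set.eq_empty_iff_forall_notMem.mpr fun x ⟨hW, hP⟩ => hPW x hP hW
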